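/- arXiv:2208.13643 — 2 statements merged into one kernel-verified Lean document; each statement's English description precedes it below -/
import Mathlib

section
/- Let f : ℝ^{n×p} → ℝ be differentiable. For every X ∈ ℝ^{n×p}, ⟨G(X), X(XᵀX − I_p)⟩ = −(3/2)·⟨sym(Xᵀ∇f(X)), (XᵀX − I_p)²⟩, where ⟨A,B⟩ = tr(AᵀB) is the trace inner product. -/
open Matrix BigOperators Finset Kronecker

/- Equip matrix spaces with the Frobenius norm (finite-dimensional, so the resulting calculus
notions such as `fderiv`/`Differentiable` are norm-independent). -/
attribute [local instance] Matrix.frobeniusNormedAddCommGroup Matrix.frobeniusNormedSpace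

/-- The Frobenius norm of a real matrix. -/
noncomputable def frob {m k : Type*} [Fintype m] [Fintype k] (A : Matrix m k ℝ) : ℝ :=
  Real.sqrt (∑ i, ∑ j, (A i j) ^ 2)

/-- The trace inner product ⟨A, B⟩ = tr(AᵀB) of real matrices. -/
noncomputable def minner {m k : Type*} [Fintype m] [Fintype k] (A B : Matrix m k ℝ) : ℝ :=
  (Aᵀ * B).trace

/-- The symmetric part sym(B) = (B + Bᵀ)/2 of a square matrix. -/
noncomputable def symPart {k : Type*} (B : Matrix k k ℝ) : Matrix k k ℝ :=
  (1 / 2 : ℝ) • (B + Bᵀ)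

/-- The generalized Riemannian gradient G(X) = ∇f(X)((3/2)I - (1/2)XᵀX) - X·sym(Xᵀ∇f(X)),
expressed in terms of the Euclidean gradient matrix `Gf = ∇f(X)`. -/
noncomputable def Gdir {n p : ℕ} (Gf X : Matrix (Fin n) (Fin p) ℝ) :
    Matrix (Fin n) (Fin p) ℝ :=
  Gf * ((3 / 2 : ℝ) • (1 : Matrix (Fin p) (Fin p) ℝ) - (1 / 2 : ℝ) • (Xᵀ * X))
    - X * symPart (Xᵀ * Gf)

/-- The feasibility direction E(X) = X(XᵀX - I). -/
noncomputable def Edir {n p : ℕ} (X : Matrix (Fin n) (Fin p) ℝ) :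
    Matrix (Fin n) (Fin p) ℝ :=
  X * (Xᵀ * X - 1)

/-- The spectral norm (largest singular value) of a real matrix, as the operator norm of the
associated Euclidean linear map. -/
noncomputable def specNorm {m k : Type*} [Fintype m] [Fintype k] [DecidableEq k]
    (A : Matrix m k ℝ) : ℝ :=
  ‖LinearMap.toContinuousLinearMap (Matrix.toEuclideanLin A)‖

/-- The smallest singular value of a real matrix: the square root of the smallest eigenvalue
of AᵀA (= AᴴA over ℝ). -/
noncomputable def sigmaMin {m k : Type*} [Fintype m] [Fintype k] [DecidableEq m] [DecidableEq k]
    (A : Matrix m k ℝ) : ℝ :=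
  Real.sqrt (⨅ i, (show (Aᵀ * A).IsHermitian by
    simpa using Matrix.isHermitian_conjTranspose_mul_self A).eigenvalues i)

/-- For differentiable `f` with gradient `gradf` and every `X`,
`⟨G(X), X(XᵀX - I)⟩ = -(3/2)·⟨sym(Xᵀ∇f(X)), (XᵀX - I)²⟩`. -/
theorem stmt3 {n p : ℕ} (f : Matrix (Fin n) (Fin p) ℝ → ℝ)
    (hf : Differentiable ℝ f)
    (gradf : Matrix (Fin n) (Fin p) ℝ → Matrix (Fin n) (Fin p) ℝ)
    (hgrad : ∀ X V, fderiv ℝ f X V = minner (gradf X) V)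
    (X : Matrix (Fin n) (Fin p) ℝ) :
    minner (Gdir (gradf X) X) (X * (Xᵀ * X - 1))
      = -(3 / 2) * minner (symPart (Xᵀ * gradf X)) ((Xᵀ * X - 1) ^ 2) := by
  classical
  set G := gradf X with hG
  set A := Xᵀ * X with hAdef
  set B := Xᵀ * G with hBdef
  set S := symPart B with hSdef
  have hA : Aᵀ = A := by simp [hAdef, Matrix.transpose_mul]
  have hS : Sᵀ = S := by
    simp [hSdef, symPart, Matrix.transpose_smul, Matrix.transpose_add, add_comm]
  have hBt : Bᵀ = Gᵀ * X := by rw [hBdef, Matrix.transpose_mul, Matrix.transpose_transpose]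
  have key : ∀ M : Matrix (Fin p) (Fin p) ℝ, Mᵀ = M →
      (Bᵀ * M).trace = (S * M).trace := by
    intro M hM
    have h1 : (B * M).trace = (Bᵀ * M).trace := by
      calc (B * M).trace = ((B * M)ᵀ).trace := (Matrix.trace_transpose _).symm
        _ = (Mᵀ * Bᵀ).trace := by rw [Matrix.transpose_mul]
        _ = (Bᵀ * Mᵀ).trace := Matrix.trace_mul_comm _ _
        _ = (Bᵀ * M).trace := by rw [hM]
    simp only [hSdef, symPart, Matrix.smul_mul, Matrix.add_mul, Matrix.trace_add,
      Matrix.trace_smul, h1, smul_eq_mul]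
    ring
  have hAm1 : (A - 1)ᵀ = A - 1 := by
    rw [Matrix.transpose_sub, hA, Matrix.transpose_one]
  have hAm1A : ((A - 1) * A)ᵀ = (A - 1) * A := by
    rw [Matrix.transpose_mul, hA, hAm1, Matrix.mul_sub, Matrix.sub_mul,
      Matrix.one_mul, Matrix.mul_one]
  have hGdirT : (Gdir G X)ᵀ
      = ((3 / 2 : ℝ) • (1 : Matrix (Fin p) (Fin p) ℝ) - (1 / 2 : ℝ) • A) * Gᵀ - S * Xᵀ := by
    simp [Gdir, Matrix.transpose_sub, Matrix.transpose_mul, Matrix.transpose_smul,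
      Matrix.transpose_one, hA, ← hBdef, ← hSdef, hS]
    rfl
  have e1 : (Gᵀ * (X * (A - 1))).trace = (S * (A - 1)).trace := by
    have h : Gᵀ * (X * (A - 1)) = Bᵀ * (A - 1) := by rw [hBt, Matrix.mul_assoc]
    rw [h, key _ hAm1]
  have e2 : (A * (Gᵀ * (X * (A - 1)))).trace = (S * ((A - 1) * A)).trace := by
    have h : A * (Gᵀ * (X * (A - 1))) = A * (Bᵀ * (A - 1)) := by
      rw [hBt, Matrix.mul_assoc Gᵀ X (A - 1)]
    rw [h, Matrix.trace_mul_comm, Matrix.mul_assoc, key _ hAm1A]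
  have e3 : (S * (Xᵀ * (X * (A - 1)))).trace = (S * (A * (A - 1))).trace := by
    rw [← Matrix.mul_assoc Xᵀ X, ← hAdef]
  have main : minner (Gdir G X) (X * (A - 1))
      = (3 / 2 : ℝ) * (S * (A - 1)).trace - (1 / 2 : ℝ) * (S * ((A - 1) * A)).trace
        - (S * (A * (A - 1))).trace := by
    rw [minner, hGdirT]
    simp only [Matrix.sub_mul, Matrix.smul_mul, Matrix.one_mul, Matrix.trace_sub,
      Matrix.trace_smul, Matrix.mul_assoc, smul_eq_mul, e1, e2, e3]
  have hsq2 : ((A - 1) : Matrix (Fin p) (Fin p) ℝ) ^ 2 = A * A - A - A + 1 := by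
    noncomm_ring
  have hmat : (3 / 2 : ℝ) • ((A - 1) : Matrix (Fin p) (Fin p) ℝ)
      - (1 / 2 : ℝ) • ((A - 1) * A) - A * (A - 1)
      = (-(3 / 2) : ℝ) • (A - 1) ^ 2 := by
    have h1 : ((A - 1) : Matrix (Fin p) (Fin p) ℝ) * A = A * A - A := by noncomm_ring
    have h2 : A * ((A - 1) : Matrix (Fin p) (Fin p) ℝ) = A * A - A := by noncomm_ring
    rw [hsq2, h1, h2]
    module
  have hR : minner S ((A - 1) ^ 2) = (S * ((A - 1) ^ 2)).trace := by rw [minner, hS]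
  rw [main, hR]
  have step1 : (3 / 2 : ℝ) * (S * (A - 1)).trace - (1 / 2 : ℝ) * (S * ((A - 1) * A)).trace
        - (S * (A * (A - 1))).trace
      = (S * ((3 / 2 : ℝ) • (A - 1) - (1 / 2 : ℝ) • ((A - 1) * A) - A * (A - 1))).trace := by
    simp only [Matrix.mul_sub, Matrix.trace_sub, Matrix.mul_smul, Matrix.trace_smul,
      smul_eq_mul]
  rw [step1, hmat, Matrix.mul_smul, Matrix.trace_smul, smul_eq_mul]
end

section
/- Let f : ℝ^{n×p} → ℝ be differentiable, let M > 0 satisfy ‖∇f(X)‖_F ≤ M for all X in R = {X : ‖XᵀX − I_p‖_F ≤ 1/6}, and let β > 0. Then for every X ∈ R, ‖H(X)‖_F² ≥ ‖G(X)‖_F² + (1/6)·β·(5β − 21M)·‖XᵀX − I_p‖_F². -/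
open Matrix BigOperators Finset Kronecker

/- Equip matrix spaces with the Frobenius norm (finite-dimensional, so the resulting calculus
notions such as `fderiv`/`Differentiable` are norm-independent). -/
attribute [local instance] Matrix.frobeniusNormedAddCommGroup Matrix.frobeniusNormedSpace

section Helpers

variable {m k l : Type*} [Fintype m] [Fintype k] [Fintype l]

lemma minner_eq_sum (A B : Matrix m k ℝ) : minner A B = ∑ i, ∑ j, A i j * B i j := by
  simp only [minner, Matrix.trace, Matrix.diag, Matrix.mul_apply, Matrix.transpose_apply]
  rw [Finset.sum_comm]

lemma frob_nonneg (A : Matrix m k ℝ) : 0 ≤ frob A := Real.sqrt_nonneg _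

lemma frob_sq (A : Matrix m k ℝ) : frob A ^ 2 = ∑ i, ∑ j, (A i j) ^ 2 := by
  rw [frob, Real.sq_sqrt]
  positivity

lemma frob_sq_eq_minner (A : Matrix m k ℝ) : frob A ^ 2 = minner A A := by
  rw [frob_sq, minner_eq_sum]; simp [sq]

lemma minner_le (A B : Matrix m k ℝ) : minner A B ≤ frob A * frob B := by
  have h := Finset.sum_mul_sq_le_sq_mul_sq Finset.univ
    (fun ij : m × k => A ij.1 ij.2) (fun ij : m × k => B ij.1 ij.2)
  have hA : minner A B = ∑ ij : m × k, A ij.1 ij.2 * B ij.1 ij.2 := by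
    rw [minner_eq_sum]; exact (Fintype.sum_prod_type (fun ij : m × k => A ij.1 ij.2 * B ij.1 ij.2)).symm
  have hfa : frob A ^ 2 = ∑ ij : m × k, (A ij.1 ij.2) ^ 2 := by
    rw [frob_sq]; exact (Fintype.sum_prod_type (fun ij : m × k => A ij.1 ij.2 ^ 2)).symm
  have hfb : frob B ^ 2 = ∑ ij : m × k, (B ij.1 ij.2) ^ 2 := by
    rw [frob_sq]; exact (Fintype.sum_prod_type (fun ij : m × k => B ij.1 ij.2 ^ 2)).symm
  have key : (minner A B) ^ 2 ≤ (frob A * frob B) ^ 2 := by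
    rw [hA, mul_pow]; rw [hfa, hfb] at *; exact h
  nlinarith [key, mul_nonneg (frob_nonneg A) (frob_nonneg B)]

lemma neg_minner_le (A B : Matrix m k ℝ) : -(frob A * frob B) ≤ minner A B := by
  have h := minner_le A (-B)
  have h1 : minner A (-B) = -minner A B := by simp [minner_eq_sum]
  have h2 : frob (-B) = frob B := by simp [frob]
  rw [h1, h2] at h
  linarith

lemma frob_mul_le (A : Matrix m k ℝ) (B : Matrix k l ℝ) : frob (A * B) ≤ frob A * frob B := by
  have h : frob (A * B) ^ 2 ≤ frob A ^ 2 * frob B ^ 2 := by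
    rw [frob_sq, frob_sq, frob_sq]
    calc ∑ i, ∑ j, ((A * B) i j) ^ 2
        ≤ ∑ i, ∑ j, (∑ t, (A i t) ^ 2) * (∑ t, (B t j) ^ 2) := by
          refine Finset.sum_le_sum fun i _ => Finset.sum_le_sum fun j _ => ?_
          simpa [Matrix.mul_apply] using
            Finset.sum_mul_sq_le_sq_mul_sq Finset.univ (fun t => A i t) (fun t => B t j)
      _ = (∑ i, ∑ t, (A i t) ^ 2) * (∑ j, ∑ t, (B t j) ^ 2) := by
          rw [Finset.sum_mul_sum]
      _ = (∑ i, ∑ t, (A i t) ^ 2) * (∑ t, ∑ j, (B t j) ^ 2) := by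
          rw [Finset.sum_comm (f := fun j t => (B t j) ^ 2)]
  nlinarith [frob_nonneg (A * B), mul_nonneg (frob_nonneg A) (frob_nonneg B)]

lemma frob_expand (U V : Matrix m k ℝ) (c : ℝ) :
    frob (U + c • V) ^ 2 = frob U ^ 2 + 2 * c * minner U V + c ^ 2 * frob V ^ 2 := by
  simp only [frob_sq, minner_eq_sum, Matrix.add_apply, Matrix.smul_apply, smul_eq_mul]
  simp only [Finset.mul_sum, ← Finset.sum_add_distrib]
  refine Finset.sum_congr rfl fun i _ => Finset.sum_congr rfl fun j _ => ?_
  ring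

end Helpers

set_option maxHeartbeats 1000000 in
/-- If `‖∇f(X)‖_F ≤ M` on `R = {X : ‖XᵀX - I‖_F ≤ 1/6}` with `M > 0` and `β > 0`,
then for every `X ∈ R`,
`‖H(X)‖_F² ≥ ‖G(X)‖_F² + (1/6)·β·(5β - 21M)·‖XᵀX - I‖_F²`, where `H(X) = G(X) + βE(X)`. -/
theorem stmt5 {n p : ℕ} (f : Matrix (Fin n) (Fin p) ℝ → ℝ)
    (hf : Differentiable ℝ f)
    (gradf : Matrix (Fin n) (Fin p) ℝ → Matrix (Fin n) (Fin p) ℝ)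
    (hgrad : ∀ X V, fderiv ℝ f X V = minner (gradf X) V)
    (M : ℝ) (hM : 0 < M)
    (hbound : ∀ X : Matrix (Fin n) (Fin p) ℝ, frob (Xᵀ * X - 1) ≤ 1 / 6 → frob (gradf X) ≤ M)
    (β : ℝ) (hβ : 0 < β)
    (X : Matrix (Fin n) (Fin p) ℝ) (hX : frob (Xᵀ * X - 1) ≤ 1 / 6) :
    frob (Gdir (gradf X) X) ^ 2 + 1 / 6 * β * (5 * β - 21 * M) * frob (Xᵀ * X - 1) ^ 2
      ≤ frob (Gdir (gradf X) X + β • Edir X) ^ 2 := by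
  set Gf := gradf X with hGf
  set A : Matrix (Fin p) (Fin p) ℝ := Xᵀ * X - 1 with hA
  set B : Matrix (Fin p) (Fin p) ℝ := Xᵀ * Gf with hB
  have hXX : Xᵀ * X = 1 + A := by rw [hA]; abel
  have hAsymm : Aᵀ = A := by
    rw [hA, Matrix.transpose_sub, Matrix.transpose_mul, Matrix.transpose_transpose,
      Matrix.transpose_one]
  have hAAsymm : (A * A)ᵀ = A * A := by rw [Matrix.transpose_mul, hAsymm]
  have hE : Edir X = X * A := rfl
  -- trace abbreviations
  set τ1 : ℝ := (Gfᵀ * (X * A)).trace with hτ1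
  set τ2 : ℝ := (Gfᵀ * (X * (A * A))).trace with hτ2
  have hBtA : Bᵀ * A = Gfᵀ * (X * A) := by
    rw [hB, Matrix.transpose_mul, Matrix.transpose_transpose, Matrix.mul_assoc]
  have hBtAA : Bᵀ * (A * A) = Gfᵀ * (X * (A * A)) := by
    rw [hB, Matrix.transpose_mul, Matrix.transpose_transpose, Matrix.mul_assoc]
  have hBA : (B * A).trace = τ1 := by
    rw [← Matrix.trace_transpose (B * A), Matrix.transpose_mul, hAsymm,
      Matrix.trace_mul_comm, hBtA]
  have hBAA : (B * (A * A)).trace = τ2 := by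
    rw [← Matrix.trace_transpose (B * (A * A)), Matrix.transpose_mul, hAAsymm,
      Matrix.trace_mul_comm, hBtAA]
  -- the key inner product identity : ⟨G, E⟩ = -(3/2) τ2
  have hSt : (symPart B)ᵀ = symPart B := by
    rw [symPart, Matrix.transpose_smul, Matrix.transpose_add, Matrix.transpose_transpose,
      add_comm]
  have hGt : (Gdir Gf X)ᵀ
      = ((3 / 2 : ℝ) • (1 : Matrix (Fin p) (Fin p) ℝ) - (1 / 2 : ℝ) • (Xᵀ * X)) * Gfᵀ
        - symPart B * Xᵀ := by
    rw [Gdir, Matrix.transpose_sub, Matrix.transpose_mul, Matrix.transpose_mul, hSt,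
      Matrix.transpose_sub, Matrix.transpose_smul, Matrix.transpose_smul,
      Matrix.transpose_one, Matrix.transpose_mul, Matrix.transpose_transpose, hB]
  have c1 : ((Xᵀ * X) * (Gfᵀ * (X * A))).trace = τ1 + τ2 := by
    rw [hXX, Matrix.add_mul, Matrix.one_mul, Matrix.trace_add,
      Matrix.trace_mul_comm A (Gfᵀ * (X * A))]
    congr 1
    simp only [Matrix.mul_assoc]
    exact hτ2.symm
  have c2 : (symPart B * (Xᵀ * (X * A))).trace = τ1 + τ2 := by
    have h1 : Xᵀ * (X * A) = A + A * A := by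
      rw [← Matrix.mul_assoc, hXX, Matrix.add_mul, Matrix.one_mul]
    rw [h1, symPart, Matrix.smul_mul, Matrix.trace_smul, Matrix.add_mul,
      Matrix.mul_add, Matrix.mul_add, Matrix.trace_add, Matrix.trace_add, Matrix.trace_add,
      hBA, hBAA, hBtA, hBtAA, hτ1, hτ2]
    push_cast
    ring_nf
  have key : minner (Gdir Gf X) (Edir X) = -(3 / 2) * τ2 := by
    rw [minner, hE, hGt, Matrix.sub_mul, Matrix.trace_sub, Matrix.mul_assoc (symPart B) Xᵀ,
      c2, Matrix.mul_assoc, Matrix.sub_mul, Matrix.smul_mul, Matrix.smul_mul,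
      Matrix.one_mul, Matrix.trace_sub, Matrix.trace_smul, Matrix.trace_smul, c1, hτ1]
    rw [smul_eq_mul, smul_eq_mul]
    ring
  -- norms and numeric bounds
  have hτ2m : τ2 = minner Gf (X * (A * A)) := rfl
  have hfrobE : frob (X * A) ^ 2 = frob A ^ 2 + minner A (A * A) := by
    rw [frob_sq_eq_minner (X * A), minner, Matrix.transpose_mul, hAsymm,
      Matrix.mul_assoc, ← Matrix.mul_assoc Xᵀ X A, hXX, Matrix.add_mul, Matrix.one_mul,
      Matrix.mul_add, Matrix.trace_add, frob_sq_eq_minner, minner, hAsymm, minner, hAsymm,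
      ← Matrix.mul_assoc]
  have hfXAA : frob (X * (A * A)) ≤ frob (X * A) * frob A := by
    rw [← Matrix.mul_assoc]
    exact frob_mul_le (X * A) A
  have hm0 : τ2 ≤ frob Gf * frob (X * (A * A)) := by
    rw [hτ2m]; exact minner_le _ _
  have hEe : frob (Edir X) = frob (X * A) := by rw [hE]
  have hg : frob Gf ≤ M := hbound X hX
  -- pass to opaque scalars
  obtain ⟨a, ha⟩ : ∃ x, frob A = x := ⟨_, rfl⟩
  obtain ⟨e, he⟩ : ∃ x, frob (X * A) = x := ⟨_, rfl⟩
  obtain ⟨t, ht⟩ : ∃ x, minner A (A * A) = x := ⟨_, rfl⟩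
  obtain ⟨g, hgE⟩ : ∃ x, frob Gf = x := ⟨_, rfl⟩
  obtain ⟨q, hq⟩ : ∃ x, frob (X * (A * A)) = x := ⟨_, rfl⟩
  obtain ⟨w, hw⟩ : ∃ x, frob (A * A) = x := ⟨_, rfl⟩
  obtain ⟨m2, hm2⟩ : ∃ x, τ2 = x := ⟨_, rfl⟩
  clear_value A B Gf τ1 τ2
  have ha0 : 0 ≤ a := ha ▸ frob_nonneg A
  have he0 : 0 ≤ e := he ▸ frob_nonneg (X * A)
  have hg0 : 0 ≤ g := hgE ▸ frob_nonneg Gf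
  have hq0 : 0 ≤ q := hq ▸ frob_nonneg (X * (A * A))
  have hw0 : 0 ≤ w := hw ▸ frob_nonneg (A * A)
  have hX' : a ≤ 1 / 6 := ha ▸ hX
  have hgM : g ≤ M := hgE ▸ hg
  have hwa : w ≤ a * a := by rw [← hw, ← ha]; exact frob_mul_le A A
  have ht1 : t ≤ a * w := by rw [← ht, ← ha, ← hw]; exact minner_le A (A * A)
  have ht2 : -(a * w) ≤ t := by rw [← ht, ← ha, ← hw]; exact neg_minner_le A (A * A)
  have hfE : e ^ 2 = a ^ 2 + t := by rw [← he, ← ha, ← ht]; exact hfrobE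
  have hqea : q ≤ e * a := by rw [← hq, ← he, ← ha]; exact hfXAA
  have hmgq : m2 ≤ g * q := by rw [← hm2, ← hgE, ← hq]; exact hm0
  have key' : minner (Gdir Gf X) (Edir X) = -(3 / 2) * m2 := by rw [key, hm2]
  clear hgrad hbound hf hXX hAsymm hAAsymm hBtA hBtAA hBA hBAA hSt hGt c1 c2
    hτ2m hfrobE hfXAA hm0 hg key hm2 hq hgE ht hw hE
  -- numeric bounds
  have hesq_le : e ^ 2 ≤ 7 / 6 * a ^ 2 :=
    by nlinarith [mul_nonneg ha0 ha0]
  have hesq_ge : 5 / 6 * a ^ 2 ≤ e ^ 2 :=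
    by nlinarith [mul_nonneg ha0 ha0]
  have hea : e ≤ 7 / 6 * a := by
    have h1 : e ^ 2 ≤ (7 / 6 * a) ^ 2 := by nlinarith [sq_nonneg a]
    have h2 : (0 : ℝ) ≤ 7 / 6 * a := by linarith
    exact (abs_le_of_sq_le_sq' h1 h2).2
  have hmle : m2 ≤ 7 / 6 * M * a ^ 2 := by
    have h1 : g * q ≤ M * (e * a) := mul_le_mul hgM hqea hq0 hM.le
    have h3 : e * a ≤ 7 / 6 * a * a := mul_le_mul_of_nonneg_right hea ha0
    have h4 := mul_le_mul_of_nonneg_left h3 hM.le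
    nlinarith [h1, h4]
  -- expand the squared norm and conclude
  rw [frob_expand (Gdir Gf X) (Edir X) β, key', hEe, he, ha]
  nlinarith [mul_le_mul_of_nonneg_left hmle hβ.le,
    mul_le_mul_of_nonneg_left hesq_ge (mul_nonneg hβ.le hβ.le), sq_nonneg a]
end
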